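/- Let (Λ, d) be a source-free k-graph with v ∈ Λ⁰ a sink. Let Λ_S⁰ = {w ∈ Λ⁰ : w ≰ v} and Λ_S¹ = Λ¹ \ {f ∈ Λ¹ : r(f) ≤ v}, with range, source, and degree inherited from Λ, and equivalence relation μ ∼_S λ iff ι(μ) ∼ ι(λ) in Λ. Then Λ_S := G_S*/∼_S is a source-free k-graph. -/

import Mathlib

open scoped Classical

/-- A `k`-colored directed graph: vertices, edges, range, source, and a color
(degree) in `Fin k` for each edge. -/
structure ColoredGraph (k : ℕ) where
  V : Type
  E : Type
  src : E → V
  rng : E → V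
  color : E → Fin k

namespace ColoredGraph

variable {k : ℕ}

/-- A list of edges (listed from the source end) is composable starting at `v`. -/
def Composable (G : ColoredGraph k) : G.V → List G.E → Prop
  | _, [] => True
  | v, e :: l => G.src e = v ∧ Composable G (G.rng e) l

/-- The final vertex reached by following a list of edges starting at `v`. -/
def endV (G : ColoredGraph k) : G.V → List G.E → G.V
  | v, [] => v
  | _, e :: l => endV G (G.rng e) l

/-- A finite path in `G` : an element of the path category `G*`.  The edges are
listed starting from the source (so the first edge of the list is the first,
innermost, edge of the path). -/
structure GPath (G : ColoredGraph k) where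
  src : G.V
  edges : List G.E
  comp : G.Composable src edges

namespace GPath

variable {G : ColoredGraph k}

/-- The range of a path. -/
def rng (p : GPath G) : G.V := G.endV p.src p.edges

/-- The color order of a path: the list of colors of its edges, starting from
the source end. -/
def colors (p : GPath G) : List (Fin k) := p.edges.map G.color

/-- The degree of a path, as an element of `ℕ^k`. -/
def deg (p : GPath G) : Fin k → ℕ := fun i => p.colors.count i

end GPath

theorem composable_append {G : ColoredGraph k} :
    ∀ (l₁ : List G.E) (v : G.V) (l₂ : List G.E),
      G.Composable v l₁ → G.Composable (G.endV v l₁) l₂ → G.Composable v (l₁ ++ l₂) := by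
  intro l₁
  induction l₁ with
  | nil => intro v l₂ _ h₂; exact h₂
  | cons e l ih => intro v l₂ h₁ h₂; exact ⟨h₁.1, ih (G.rng e) l₂ h₁.2 h₂⟩

theorem endV_append {G : ColoredGraph k} :
    ∀ (l₁ : List G.E) (v : G.V) (l₂ : List G.E),
      G.endV v (l₁ ++ l₂) = G.endV (G.endV v l₁) l₂ := by
  intro l₁
  induction l₁ with
  | nil => intro v l₂; rfl
  | cons e l ih => intro v l₂; exact ih (G.rng e) l₂

/-- Concatenation of composable paths. -/
def GPath.append {G : ColoredGraph k} (p q : GPath G) (h : p.rng = q.src) : GPath G :=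
  ⟨p.src, p.edges ++ q.edges,
    composable_append p.edges p.src q.edges p.comp
      (by rw [show G.endV p.src p.edges = q.src from h]; exact q.comp)⟩

/-- The path consisting of a single edge. -/
def edgePath (G : ColoredGraph k) (e : G.E) : GPath G :=
  ⟨G.src e, [e], by exact ⟨rfl, True.intro⟩⟩

/-- The relation preserves range, source and degree. -/
def PreservesRSD (G : ColoredGraph k) (rel : GPath G → GPath G → Prop) : Prop :=
  ∀ p q : GPath G, rel p q → p.src = q.src ∧ p.rng = q.rng ∧ p.deg = q.deg

/-- (KG0): the relation respects concatenation of paths. -/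
def KG0 (G : ColoredGraph k) (rel : GPath G → GPath G → Prop) : Prop :=
  ∀ (p₁ p₂ q₁ q₂ : GPath G) (h : p₁.rng = p₂.src) (h' : q₁.rng = q₂.src),
    rel p₁ q₁ → rel p₂ q₂ → rel (p₁.append p₂ h) (q₁.append q₂ h')

/-- (KG4): for each path and each permutation of its color order there is a
unique equivalent path with the permuted color order. -/
def KG4 (G : ColoredGraph k) (rel : GPath G → GPath G → Prop) : Prop :=
  ∀ (p : GPath G) (c : List (Fin k)), List.Perm c p.colors →
    ∃! q : GPath G, rel q p ∧ q.colors = c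

/-- (KG1): distinct edges are inequivalent. -/
def KG1 (G : ColoredGraph k) (rel : GPath G → GPath G → Prop) : Prop :=
  ∀ e f : G.E, rel (edgePath G e) (edgePath G f) ↔ e = f

/-- (KG2): completeness for bi-colored paths. -/
def KG2 (G : ColoredGraph k) (rel : GPath G → GPath G → Prop) : Prop :=
  ∀ (p : GPath G) (i j : Fin k), p.colors = [i, j] →
    ∃! q : GPath G, rel p q ∧ q.colors = [j, i]

/-- An equivalence relation, together with `KG0` and `KG4`, presents a `k`-graph. -/
def IsKGraphRel (G : ColoredGraph k) (rel : GPath G → GPath G → Prop) : Prop :=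
  Equivalence rel ∧ PreservesRSD G rel ∧ KG0 G rel ∧ KG4 G rel

/-- Every vertex receives an edge of every color. -/
def SourceFree (G : ColoredGraph k) : Prop :=
  ∀ (v : G.V) (i : Fin k), ∃ e : G.E, G.rng e = v ∧ G.color e = i

/-- Every vertex receives finitely many edges of each color. -/
def RowFinite (G : ColoredGraph k) : Prop :=
  ∀ (v : G.V) (i : Fin k), Set.Finite {e : G.E | G.rng e = v ∧ G.color e = i}

/-- `q` is obtained from `p` by replacing the initial (inner) two-edge subpath by
an equivalent two-edge path with transposed colors. -/
def SwapInner (G : ColoredGraph k) (rel : GPath G → GPath G → Prop) (p q : GPath G) : Prop :=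
  ∃ (a b w : GPath G) (ha : a.rng = w.src) (hb : b.rng = w.src),
    a.edges.length = 2 ∧ b.colors = a.colors.reverse ∧ rel a b ∧
    p = a.append w ha ∧ q = b.append w hb

/-- `q` is obtained from `p` by replacing the final (outer) two-edge subpath by
an equivalent two-edge path with transposed colors. -/
def SwapOuter (G : ColoredGraph k) (rel : GPath G → GPath G → Prop) (p q : GPath G) : Prop :=
  ∃ (w a b : GPath G) (ha : w.rng = a.src) (hb : w.rng = b.src),
    a.edges.length = 2 ∧ b.colors = a.colors.reverse ∧ rel a b ∧
    p = w.append a ha ∧ q = w.append b hb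

/-- (KG3): associativity. For a tri-colored path with pairwise distinct colors,
the two standard routes of successive pairwise swaps give the same result. -/
def KG3 (G : ColoredGraph k) (rel : GPath G → GPath G → Prop) : Prop :=
  ∀ (p : GPath G) (i j l : Fin k), i ≠ j → j ≠ l → i ≠ l →
    p.colors = [l, j, i] → ∀ p₁ p₂ p₃ q₁ q₂ q₃ : GPath G,
      SwapOuter G rel p p₁ → SwapInner G rel p₁ p₂ → SwapOuter G rel p₂ p₃ →
      SwapInner G rel p q₁ → SwapOuter G rel q₁ q₂ → SwapInner G rel q₂ q₃ → p₃ = q₃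

/-- `w ≤ v` : there is a path from `v` to `w` (source `v`, range `w`). -/
def LeV (G : ColoredGraph k) (v w : G.V) : Prop :=
  ∃ p : GPath G, p.src = v ∧ p.rng = w

theorem LeV_extend {G : ColoredGraph k} {v : G.V} (e : G.E)
    (h : LeV G v (G.src e)) : LeV G v (G.rng e) := by
  obtain ⟨p, hs, hr⟩ := h
  refine ⟨p.append (edgePath G e) hr, hs, ?_⟩
  show G.endV p.src (p.edges ++ [e]) = G.rng e
  exact (endV_append p.edges p.src [e]).trans rfl

/-- A complete edge from `u` to `w`: exactly one edge of each color, all with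
source `u` and range `w`, closed under commuting squares. -/
def IsCompleteEdge (G : ColoredGraph k) (rel : GPath G → GPath G → Prop)
    (E : Set G.E) (u w : G.V) : Prop :=
  (∀ i : Fin k, ∃! e : G.E, e ∈ E ∧ G.color e = i) ∧
  (∀ e ∈ E, G.src e = u ∧ G.rng e = w) ∧
  (∀ e ∈ E, ∀ a b f' : G.E, ∀ p q : GPath G,
    ((p.edges = [a, e] ∧ q.edges = [b, f']) ∨ (p.edges = [e, a] ∧ q.edges = [f', b])) →
    rel p q → f' ∈ E)

/-- A set `T` of edges of the color of `f` is closed under being opposite to a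
member in a commuting square whose other color differs from that of `f`. -/
def SqClosed (G : ColoredGraph k) (rel : GPath G → GPath G → Prop)
    (f : G.E) (T : Set G.E) : Prop :=
  ∀ g ∈ T, ∀ (e a b : G.E) (p q : GPath G),
    G.color a = G.color b → G.color a ≠ G.color f → G.color e = G.color f →
    ((p.edges = [g, a] ∧ q.edges = [b, e]) ∨ (p.edges = [a, g] ∧ q.edges = [e, b])) →
    rel p q → e ∈ T

/-- Vertices of the sink-deleted graph: the vertices `w` with `w ≰ v`. -/
abbrev SV (G : ColoredGraph k) (v : G.V) := {w : G.V // ¬ LeV G v w}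

/-- Edges of the sink-deleted graph: the edges whose range is `≰ v`. -/
abbrev SE (G : ColoredGraph k) (v : G.V) := {e : G.E // ¬ LeV G v (G.rng e)}

/-- The colored graph obtained by deleting the sink `v`: all vertices `≤ v` and
all edges with range `≤ v` are removed. -/
def SinkDelete (G : ColoredGraph k) (v : G.V) : ColoredGraph k where
  V := SV G v
  E := SE G v
  src := fun e => ⟨G.src e.1, fun h => e.2 (LeV_extend e.1 h)⟩
  rng := fun e => ⟨G.rng e.1, e.2⟩
  color := fun e => G.color e.1

/-- The equivalence relation on paths of the sink-deleted graph: paths are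
related iff their inclusions into the original graph are related. -/
def SinkRel (G : ColoredGraph k) (rel : GPath G → GPath G → Prop) (v : G.V)
    (p q : GPath (SinkDelete G v)) : Prop :=
  ∃ p' q' : GPath G,
    p'.src = p.src.1 ∧ p'.edges = p.edges.map Subtype.val ∧
    q'.src = q.src.1 ∧ q'.edges = q.edges.map Subtype.val ∧ rel p' q'

section Aux

variable {k : ℕ} {G : ColoredGraph k} {v : G.V}

theorem GPath.ext' {p q : GPath G} (h1 : p.src = q.src) (h2 : p.edges = q.edges) : p = q := by
  cases p; cases q; simp_all

theorem sd_composable_val : ∀ (l : List (SE G v)) (w : SV G v),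
    (SinkDelete G v).Composable w l → G.Composable w.1 (l.map Subtype.val)
  | [], _, _ => trivial
  | e :: l, w, h => ⟨congrArg Subtype.val h.1, sd_composable_val l _ h.2⟩

theorem sd_composable_of : ∀ (l : List (SE G v)) (w : SV G v),
    G.Composable w.1 (l.map Subtype.val) → (SinkDelete G v).Composable w l
  | [], _, _ => trivial
  | e :: l, w, h => ⟨Subtype.ext h.1, sd_composable_of l _ h.2⟩

theorem sd_endV_val : ∀ (l : List (SE G v)) (w : SV G v),
    ((SinkDelete G v).endV w l).1 = G.endV w.1 (l.map Subtype.val)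
  | [], _ => rfl
  | e :: l, _ => sd_endV_val l _

/-- Inclusion of a path of the sink-deleted graph into the original graph. -/
def incl (p : GPath (SinkDelete G v)) : GPath G :=
  ⟨p.src.1, p.edges.map Subtype.val, sd_composable_val p.edges p.src p.comp⟩

theorem incl_src (p : GPath (SinkDelete G v)) : (incl p).src = p.src.1 := rfl

theorem incl_edges (p : GPath (SinkDelete G v)) :
    (incl p).edges = p.edges.map Subtype.val := rfl

theorem incl_rng (p : GPath (SinkDelete G v)) : (incl p).rng = p.rng.1 :=
  (sd_endV_val p.edges p.src).symm

theorem incl_colors (p : GPath (SinkDelete G v)) : (incl p).colors = p.colors := by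
  simp only [GPath.colors, incl, List.map_map]
  exact List.map_map.trans rfl

theorem incl_deg (p : GPath (SinkDelete G v)) : (incl p).deg = p.deg := by
  funext j; simp [GPath.deg, incl_colors]

theorem incl_inj {p q : GPath (SinkDelete G v)} (h : incl p = incl q) : p = q := by
  apply GPath.ext'
  · exact Subtype.ext (congrArg GPath.src h)
  · have := congrArg GPath.edges h
    simp only [incl_edges] at this
    exact (List.map_injective_iff.mpr Subtype.val_injective) this

theorem sinkRel_iff (rel : GPath G → GPath G → Prop) (p q : GPath (SinkDelete G v)) :
    SinkRel G rel v p q ↔ rel (incl p) (incl q) := by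
  constructor
  · rintro ⟨p', q', h1, h2, h3, h4, h5⟩
    have hp : p' = incl p := GPath.ext' h1 h2
    have hq : q' = incl q := GPath.ext' h3 h4
    rwa [hp, hq] at h5
  · intro h
    exact ⟨incl p, incl q, rfl, rfl, rfl, rfl, h⟩

theorem notLe_src : ∀ (l : List G.E) (w : G.V), G.Composable w l →
    ¬ LeV G v (G.endV w l) → ¬ LeV G v w
  | [], _, _, hn => hn
  | e :: l, w, h, hn => by
    intro hw
    have hre : ¬ LeV G v (G.endV (G.rng e) l) := hn
    have : ¬ LeV G v (G.rng e) := notLe_src l (G.rng e) h.2 hre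
    exact this (LeV_extend e (h.1 ▸ hw))

theorem notLe_mem : ∀ (l : List G.E) (w : G.V), G.Composable w l →
    ¬ LeV G v (G.endV w l) → ∀ e ∈ l, ¬ LeV G v (G.rng e)
  | [], _, _, _, e, he => absurd he List.not_mem_nil
  | f :: l, w, h, hn, e, he => by
    rcases List.mem_cons.mp he with h1 | h1
    · subst h1
      exact notLe_src l (G.rng e) h.2 hn
    · exact notLe_mem l (G.rng f) h.2 hn e h1

theorem map_val_pmap (P : G.E → Prop) :
    ∀ (l : List G.E) (H : ∀ e ∈ l, P e),
      (l.pmap (fun e he => (⟨e, he⟩ : {e // P e})) H).map Subtype.val = l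
  | [], _ => rfl
  | e :: l, H => by
    simp only [List.pmap, List.map_cons, List.cons.injEq, map_val_pmap P l, and_true]

/-- Lift a path of `G` whose range is `≰ v` to a path of the sink-deleted graph. -/
noncomputable def liftPath (q : GPath G) (hq : ¬ LeV G v q.rng) :
    GPath (SinkDelete G v) :=
  ⟨⟨q.src, notLe_src q.edges q.src q.comp hq⟩,
    q.edges.pmap (fun e he => (⟨e, he⟩ : SE G v)) (notLe_mem q.edges q.src q.comp hq),
    by
      apply sd_composable_of
      exact (congrArg (G.Composable q.src)
        (map_val_pmap (fun e => ¬ LeV G v (G.rng e)) q.edges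
          (notLe_mem q.edges q.src q.comp hq))).mpr q.comp⟩

theorem incl_liftPath (q : GPath G) (hq : ¬ LeV G v q.rng) :
    incl (liftPath q hq) = q := by
  apply GPath.ext'
  · rfl
  · exact map_val_pmap _ q.edges _

end Aux

/-- Deleting a sink from a source-free `k`-graph yields a source-free
`k`-graph. -/
theorem sinkdelete_is_kgraph {k : ℕ} (G : ColoredGraph k) (rel : GPath G → GPath G → Prop)
    (hK : IsKGraphRel G rel) (hsf : SourceFree G)
    (v : G.V) (i : Fin k) (hsink : ∀ e : G.E, G.src e = v → G.color e ≠ i) :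
    IsKGraphRel (SinkDelete G v) (SinkRel G rel v) ∧ SourceFree (SinkDelete G v) := by
  obtain ⟨hEq, hRSD, hKG0, hKG4⟩ := hK
  constructor
  · refine ⟨⟨?_, ?_, ?_⟩, ?_, ?_, ?_⟩
    · -- reflexivity
      intro p
      exact (sinkRel_iff rel p p).mpr (hEq.refl (incl p))
    · -- symmetry
      intro p q h
      exact (sinkRel_iff rel q p).mpr (hEq.symm ((sinkRel_iff rel p q).mp h))
    · -- transitivity
      intro p q r hpq hqr
      exact (sinkRel_iff rel p r).mpr
        (hEq.trans ((sinkRel_iff rel p q).mp hpq) ((sinkRel_iff rel q r).mp hqr))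
    · -- PreservesRSD
      intro p q h
      obtain ⟨h1, h2, h3⟩ := hRSD (incl p) (incl q) ((sinkRel_iff rel p q).mp h)
      refine ⟨Subtype.ext h1, Subtype.ext ?_, ?_⟩
      · rw [← incl_rng, ← incl_rng, h2]
      · rw [← incl_deg, ← incl_deg, h3]
    · -- KG0
      intro p₁ p₂ q₁ q₂ h h' h₁ h₂
      rw [sinkRel_iff] at h₁ h₂ ⊢
      have hh : (incl p₁).rng = (incl p₂).src := by rw [incl_rng, h]; rfl
      have hh' : (incl q₁).rng = (incl q₂).src := by rw [incl_rng, h']; rfl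
      have e1 : incl (p₁.append p₂ h) = (incl p₁).append (incl p₂) hh := by
        apply GPath.ext'
        · rfl
        · simp [incl_edges, GPath.append]
          exact List.map_append
      have e2 : incl (q₁.append q₂ h') = (incl q₁).append (incl q₂) hh' := by
        apply GPath.ext'
        · rfl
        · simp [incl_edges, GPath.append]
          exact List.map_append
      rw [e1, e2]
      exact hKG0 _ _ _ _ hh hh' h₁ h₂
    · -- KG4
      intro p c hc
      rw [← incl_colors] at hc
      obtain ⟨q', ⟨hq'rel, hq'c⟩, hq'uniq⟩ := hKG4 (incl p) c hc
      have hrng : ¬ LeV G v q'.rng := by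
        have := (hRSD q' (incl p) hq'rel).2.1
        rw [this, incl_rng]
        exact p.rng.2
      refine ⟨liftPath q' hrng, ⟨?_, ?_⟩, ?_⟩
      · rw [sinkRel_iff, incl_liftPath]
        exact hq'rel
      · rw [← incl_colors, incl_liftPath]
        exact hq'c
      · intro q'' ⟨hrel, hcol⟩
        apply incl_inj
        rw [incl_liftPath]
        exact hq'uniq (incl q'')
          ⟨(sinkRel_iff rel q'' p).mp hrel, by rw [incl_colors]; exact hcol⟩
  · -- SourceFree
    intro w j
    obtain ⟨e, he1, he2⟩ := hsf w.1 j
    have hne : ¬ LeV G v (G.rng e) := he1 ▸ w.2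
    exact ⟨⟨e, hne⟩, Subtype.ext he1, he2⟩

end ColoredGraph
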